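/- Let Y be a Hadamard space, p,q ∈ Y, c a nontrivial geodesic starting at p and c' a nontrivial geodesic starting at q. Then cos ∠_p(c, pq) = lim_{t→0} (d(p, c'(t)) − d(c(t), c'(t)))/t, where pq denotes the geodesic from p to q. -/

import Mathlib

open Filter Metric Set Topology

/-- A Hadamard space: a complete metric space with midpoints satisfying the CN
(comparison) inequality of CAT(0) geometry. -/
class HadamardSpace (Y : Type*) [MetricSpace Y] : Prop where
  complete : CompleteSpace Y
  midpoints : ∀ x y : Y, ∃ m : Y, dist x m = dist x y / 2 ∧ dist m y = dist x y / 2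
  cn : ∀ x y z m : Y, dist y m = dist y z / 2 → dist m z = dist y z / 2 →
    dist x m ^ 2 ≤ dist x y ^ 2 / 2 + dist x z ^ 2 / 2 - dist y z ^ 2 / 4

/-- `c` is a unit-speed geodesic on the interval `[a, b]`. -/
def IsGeodesicOn {Y : Type*} [MetricSpace Y] (c : ℝ → Y) (a b : ℝ) : Prop :=
  ∀ s ∈ Set.Icc a b, ∀ t ∈ Set.Icc a b, dist (c s) (c t) = |s - t|

/-- The Euclidean comparison angle at `p` of the triangle `(p, x, y)`. -/
noncomputable def compAngle {Y : Type*} [MetricSpace Y] (p x y : Y) : ℝ :=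
  Real.arccos ((dist p x ^ 2 + dist p y ^ 2 - dist x y ^ 2) / (2 * dist p x * dist p y))

section Aux

variable {Y : Type*} [MetricSpace Y]

private lemma midpoint_convex_to_convexOn {f : ℝ → ℝ} {a b : ℝ}
    (hcont : ContinuousOn f (Icc a b))
    (hmid : ∀ x ∈ Icc a b, ∀ y ∈ Icc a b, f ((x + y) / 2) ≤ (f x + f y) / 2) :
    ConvexOn ℝ (Icc a b) f := by
  refine ⟨convex_Icc a b, ?_⟩
  intro x hx y hy α β hα hβ hαβ
  obtain ⟨φ, hφ⟩ : ∃ φ : ℝ → ℝ, φ = fun l => (1 - l) * x + l * y := ⟨_, rfl⟩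
  have hφmem : ∀ l ∈ Icc (0:ℝ) 1, φ l ∈ Icc a b := by
    intro l hl
    have := (convex_Icc a b) hx hy (by linarith [hl.2] : (0:ℝ) ≤ 1 - l) hl.1 (by ring)
    simpa [hφ, smul_eq_mul] using this
  obtain ⟨G, hG⟩ : ∃ G : ℝ → ℝ, G = fun l => f (φ l) - ((1 - l) * f x + l * f y) := ⟨_, rfl⟩
  have hGmid : ∀ u ∈ Icc (0:ℝ) 1, ∀ v ∈ Icc (0:ℝ) 1, G ((u + v) / 2) ≤ (G u + G v) / 2 := by
    intro u hu v hv
    have hphi : φ ((u + v) / 2) = (φ u + φ v) / 2 := by simp only [hφ]; ring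
    have h2 := hmid (φ u) (hφmem u hu) (φ v) (hφmem v hv)
    rw [← hphi] at h2
    simp only [hG]
    linarith [h2]
  have hGcont : ContinuousOn G (Icc 0 1) := by
    rw [hG]
    apply ContinuousOn.sub
    · exact hcont.comp (by rw [hφ]; fun_prop) hφmem
    · fun_prop
  obtain ⟨l₀, hl₀, hmax⟩ := isCompact_Icc.exists_isMaxOn ⟨0, by norm_num⟩ hGcont
  rw [isMaxOn_iff] at hmax
  have hG0 : G 0 = 0 := by simp [hG, hφ]
  have hG1 : G 1 = 0 := by simp [hG, hφ]
  have hkey : G l₀ ≤ 0 := by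
    by_contra h
    push_neg at h
    rcases le_or_gt l₀ (1/2) with hc | hc
    · have h2 : (2 * l₀) ∈ Icc (0:ℝ) 1 := ⟨by linarith [hl₀.1], by linarith⟩
      have ha1 := hGmid 0 (by norm_num) (2 * l₀) h2
      rw [show (0 + 2 * l₀) / 2 = l₀ by ring, hG0] at ha1
      have ha2 := hmax (2 * l₀) h2
      linarith
    · have h2 : (2 * l₀ - 1) ∈ Icc (0:ℝ) 1 := ⟨by linarith, by linarith [hl₀.2]⟩
      have ha1 := hGmid (2 * l₀ - 1) h2 1 (by norm_num)
      rw [show (2 * l₀ - 1 + 1) / 2 = l₀ by ring, hG1] at ha1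
      have ha2 := hmax (2 * l₀ - 1) h2
      linarith
  have hβ1 : β ∈ Icc (0:ℝ) 1 := ⟨hβ, by linarith⟩
  have hfin := le_trans (hmax β hβ1) hkey
  rw [hG, hφ] at hfin
  simp only at hfin
  simp only [smul_eq_mul]
  rw [show α = 1 - β by linarith]
  linarith [hfin]

private lemma dist_sq_sub_sq_convexOn [HadamardSpace Y] {γ : ℝ → Y} {a b : ℝ}
    (h : IsGeodesicOn γ a b) (x : Y) :
    ConvexOn ℝ (Icc a b) (fun t => dist x (γ t) ^ 2 - t ^ 2) := by
  apply midpoint_convex_to_convexOn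
  · have hγ : ContinuousOn γ (Icc a b) := by
      apply LipschitzOnWith.continuousOn (K := 1)
      rw [lipschitzOnWith_iff_dist_le_mul]
      intro s hs t ht
      rw [h s hs t ht, Real.dist_eq]
      simp
    exact (((continuous_const.dist continuous_id).comp_continuousOn hγ).pow 2).sub (by fun_prop)
  · intro s hs t ht
    have hm : (s + t) / 2 ∈ Icc a b := ⟨by linarith [hs.1, ht.1], by linarith [hs.2, ht.2]⟩
    have h1 : dist (γ s) (γ ((s + t) / 2)) = dist (γ s) (γ t) / 2 := by
      rw [h s hs _ hm, h s hs t ht]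
      rw [show s - (s + t) / 2 = (s - t) / 2 by ring, abs_div]
      norm_num
    have h2 : dist (γ ((s + t) / 2)) (γ t) = dist (γ s) (γ t) / 2 := by
      rw [h _ hm t ht, h s hs t ht]
      rw [show (s + t) / 2 - t = (s - t) / 2 by ring, abs_div]
      norm_num
    have hcn := HadamardSpace.cn x (γ s) (γ t) (γ ((s + t) / 2)) h1 h2
    rw [h s hs t ht] at hcn
    have habs : |s - t| ^ 2 = (s - t) ^ 2 := sq_abs _
    nlinarith [hcn]

private lemma quad_ineq [HadamardSpace Y] (x₁ x₂ x₃ x₄ : Y) :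
    dist x₁ x₃ ^ 2 + dist x₂ x₄ ^ 2 ≤
      dist x₁ x₂ ^ 2 + dist x₂ x₃ ^ 2 + dist x₃ x₄ ^ 2 + dist x₄ x₁ ^ 2 := by
  obtain ⟨m, hm1, hm2⟩ := HadamardSpace.midpoints x₂ x₄
  have h1 := HadamardSpace.cn x₁ x₂ x₄ m hm1 hm2
  have h3 := HadamardSpace.cn x₃ x₂ x₄ m hm1 hm2
  have htri : dist x₁ x₃ ≤ dist x₁ m + dist m x₃ := dist_triangle _ _ _
  have hc1 : dist x₃ m = dist m x₃ := dist_comm _ _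
  have hc2 : dist x₄ x₁ = dist x₁ x₄ := dist_comm _ _
  have hc3 : dist x₂ x₃ = dist x₃ x₂ := dist_comm _ _
  have hsq : dist x₁ x₃ ^ 2 ≤ (dist x₁ m + dist m x₃) ^ 2 := by
    nlinarith [htri, dist_nonneg (x := x₁) (y := x₃)]
  rw [hc1] at h3
  rw [hc2, hc3]
  nlinarith [hsq, sq_nonneg (dist x₁ m - dist m x₃), h1, h3]

private lemma geo_dist_start {γ : ℝ → Y} {b : ℝ} (h : IsGeodesicOn γ 0 b) (hb : 0 ≤ b)
    {s : ℝ} (hs : s ∈ Icc 0 b) : dist (γ 0) (γ s) = s := by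
  rw [h 0 ⟨le_refl _, hb⟩ s hs, zero_sub, abs_neg, abs_of_nonneg hs.1]

end Aux

section Machine

private noncomputable def uFun (d : ℝ → ℝ → ℝ) (s τ : ℝ) : ℝ :=
  (s ^ 2 + τ ^ 2 - d s τ ^ 2) / (2 * s * τ)

private lemma limit_machine {ε₀ L : ℝ} (hε₀ : 0 < ε₀) (hL : 0 < L) (d : ℝ → ℝ → ℝ)
    (hlb : ∀ s ∈ Ioc (0:ℝ) ε₀, ∀ τ ∈ Ioc (0:ℝ) L, |τ - s| ≤ d s τ)
    (hub : ∀ s ∈ Ioc (0:ℝ) ε₀, ∀ τ ∈ Ioc (0:ℝ) L, d s τ ≤ s + τ)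
    (hnn : ∀ s ∈ Ioc (0:ℝ) ε₀, ∀ τ ∈ Ioc (0:ℝ) L, 0 ≤ d s τ)
    (hms : ∀ τ ∈ Ioc (0:ℝ) L, ∀ s₁ ∈ Ioc (0:ℝ) ε₀, ∀ s₂ ∈ Ioc (0:ℝ) ε₀,
      s₁ ≤ s₂ → uFun d s₂ τ ≤ uFun d s₁ τ)
    (hmt : ∀ s ∈ Ioc (0:ℝ) ε₀, ∀ τ₁ ∈ Ioc (0:ℝ) L, ∀ τ₂ ∈ Ioc (0:ℝ) L,
      τ₁ ≤ τ₂ → uFun d s τ₂ ≤ uFun d s τ₁)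
    (htri : ∀ s ∈ Ioc (0:ℝ) ε₀, ∀ τ₁ ∈ Ioc (0:ℝ) L, ∀ τ₂ ∈ Ioc (0:ℝ) L,
      τ₁ ≤ τ₂ → d s τ₂ ≤ d s τ₁ + (τ₂ - τ₁)) :
    ∃ M : ℝ, -1 ≤ M ∧ M ≤ 1 ∧
      Tendsto (fun st : ℝ × ℝ => uFun d st.1 st.2)
        ((𝓝[>] (0:ℝ)) ×ˢ (𝓝[>] (0:ℝ))) (𝓝 M) ∧
      (∀ τ ∈ Ioc (0:ℝ) L, Tendsto (fun s => uFun d s τ) (𝓝[>] (0:ℝ)) (𝓝 M)) ∧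
      (∀ τ ∈ Ioc (0:ℝ) L, Tendsto (fun s => (τ - d s τ) / s) (𝓝[>] (0:ℝ)) (𝓝 M)) := by
  have hu_le : ∀ s ∈ Ioc (0:ℝ) ε₀, ∀ τ ∈ Ioc (0:ℝ) L, uFun d s τ ≤ 1 := by
    intro s hs τ hτ
    have h1 := hlb s hs τ hτ
    have habs : |τ - s| ^ 2 = (τ - s) ^ 2 := sq_abs _
    rw [uFun, div_le_one (by nlinarith [hs.1, hτ.1] : (0:ℝ) < 2 * s * τ)]
    nlinarith [abs_nonneg (τ - s)]
  have hu_ge : ∀ s ∈ Ioc (0:ℝ) ε₀, ∀ τ ∈ Ioc (0:ℝ) L, -1 ≤ uFun d s τ := by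
    intro s hs τ hτ
    have h1 := hub s hs τ hτ
    have h2 := hnn s hs τ hτ
    rw [uFun, le_div_iff₀ (by nlinarith [hs.1, hτ.1] : (0:ℝ) < 2 * s * τ)]
    nlinarith
  have hεm : ε₀ ∈ Ioc (0:ℝ) ε₀ := ⟨hε₀, le_refl _⟩
  have hSne : ∀ τ, ((fun s => uFun d s τ) '' Ioc 0 ε₀).Nonempty :=
    fun τ => ⟨_, mem_image_of_mem _ hεm⟩
  have hSbdd : ∀ τ ∈ Ioc (0:ℝ) L, BddAbove ((fun s => uFun d s τ) '' Ioc 0 ε₀) := by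
    intro τ hτ
    refine ⟨1, ?_⟩
    rintro _ ⟨s, hs, rfl⟩
    exact hu_le s hs τ hτ
  have htend : ∀ τ ∈ Ioc (0:ℝ) L, Tendsto (fun s => uFun d s τ) (𝓝[>] (0:ℝ))
      (𝓝 (sSup ((fun s => uFun d s τ) '' Ioc 0 ε₀))) := by
    intro τ hτ
    rw [tendsto_order]
    constructor
    · intro x hx
      obtain ⟨_, ⟨s₀, hs₀, rfl⟩, hxlt⟩ := exists_lt_of_lt_csSup (hSne τ) hx
      filter_upwards [Ioc_mem_nhdsGT hs₀.1] with s hs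
      exact lt_of_lt_of_le hxlt (hms τ hτ s ⟨hs.1, hs.2.trans hs₀.2⟩ s₀ hs₀ hs.2)
    · intro x hx
      filter_upwards [Ioc_mem_nhdsGT hε₀] with s hs
      exact lt_of_le_of_lt (le_csSup (hSbdd τ hτ) (mem_image_of_mem _ hs)) hx
  have hl_le : ∀ τ ∈ Ioc (0:ℝ) L, sSup ((fun s => uFun d s τ) '' Ioc 0 ε₀) ≤ 1 := by
    intro τ hτ
    apply csSup_le (hSne τ)
    rintro _ ⟨s, hs, rfl⟩
    exact hu_le s hs τ hτ
  have hl_ge : ∀ τ ∈ Ioc (0:ℝ) L, -1 ≤ sSup ((fun s => uFun d s τ) '' Ioc 0 ε₀) := by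
    intro τ hτ
    exact le_trans (hu_ge ε₀ hεm τ hτ) (le_csSup (hSbdd τ hτ) (mem_image_of_mem _ hεm))
  have hdtend : ∀ τ ∈ Ioc (0:ℝ) L, Tendsto (fun s => d s τ) (𝓝[>] (0:ℝ)) (𝓝 τ) := by
    intro τ hτ
    have h0 : Tendsto (fun s : ℝ => s) (𝓝[>] (0:ℝ)) (𝓝 0) :=
      tendsto_id.mono_left nhdsWithin_le_nhds
    have h1 : Tendsto (fun s => d s τ - τ) (𝓝[>] (0:ℝ)) (𝓝 0) := by
      apply squeeze_zero_norm' _ h0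
      filter_upwards [Ioc_mem_nhdsGT hε₀] with s hs
      have hl := hlb s hs τ hτ
      have hu := hub s hs τ hτ
      rw [Real.norm_eq_abs, abs_le]
      constructor
      · have : τ - s ≤ |τ - s| := le_abs_self _
        linarith
      · linarith
    have h2 := h1.add_const τ
    simpa using h2
  have hratio : ∀ τ ∈ Ioc (0:ℝ) L, Tendsto (fun s => (τ - d s τ) / s) (𝓝[>] (0:ℝ))
      (𝓝 (sSup ((fun s => uFun d s τ) '' Ioc 0 ε₀))) := by
    intro τ hτ
    have hev : (fun s => (2 * τ * uFun d s τ - s) / (τ + d s τ)) =ᶠ[𝓝[>] (0:ℝ)]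
        (fun s => (τ - d s τ) / s) := by
      filter_upwards [Ioc_mem_nhdsGT hε₀] with s hs
      have hdpos : 0 < τ + d s τ := by
        have := hnn s hs τ hτ
        linarith [hτ.1]
      have hs0 : s ≠ 0 := ne_of_gt hs.1
      have hτ0 : τ ≠ 0 := ne_of_gt hτ.1
      have hd0 : τ + d s τ ≠ 0 := ne_of_gt hdpos
      rw [uFun]
      field_simp
      ring
    apply Tendsto.congr' hev
    have hnum : Tendsto (fun s => 2 * τ * uFun d s τ - s) (𝓝[>] (0:ℝ))
        (𝓝 (2 * τ * sSup ((fun s => uFun d s τ) '' Ioc 0 ε₀) - 0)) :=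
      ((htend τ hτ).const_mul _).sub (tendsto_id.mono_left nhdsWithin_le_nhds)
    have hden : Tendsto (fun s => τ + d s τ) (𝓝[>] (0:ℝ)) (𝓝 (τ + τ)) :=
      tendsto_const_nhds.add (hdtend τ hτ)
    have hq := hnum.div hden (by linarith [hτ.1] : τ + τ ≠ 0)
    have hval : (2 * τ * sSup ((fun s => uFun d s τ) '' Ioc 0 ε₀) - 0) / (τ + τ) =
        sSup ((fun s => uFun d s τ) '' Ioc 0 ε₀) := by
      have hτ0 : τ ≠ 0 := ne_of_gt hτ.1
      rw [sub_zero, show τ + τ = 2 * τ by ring]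
      exact mul_div_cancel_left₀ _ (mul_ne_zero two_ne_zero hτ0)
    rwa [hval] at hq
  have hconst : ∀ τ₁ ∈ Ioc (0:ℝ) L, ∀ τ₂ ∈ Ioc (0:ℝ) L, τ₁ ≤ τ₂ →
      sSup ((fun s => uFun d s τ₁) '' Ioc 0 ε₀) = sSup ((fun s => uFun d s τ₂) '' Ioc 0 ε₀) := by
    intro τ₁ hτ₁ τ₂ hτ₂ hle
    apply le_antisymm
    · apply le_of_tendsto_of_tendsto (hratio τ₁ hτ₁) (hratio τ₂ hτ₂)
      filter_upwards [Ioc_mem_nhdsGT hε₀] with s hs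
      have h1 := htri s hs τ₁ hτ₁ τ₂ hτ₂ hle
      exact (div_le_div_iff_of_pos_right hs.1).2 (by linarith)
    · apply le_of_tendsto_of_tendsto (htend τ₂ hτ₂) (htend τ₁ hτ₁)
      filter_upwards [Ioc_mem_nhdsGT hε₀] with s hs
      exact hmt s hs τ₁ hτ₁ τ₂ hτ₂ hle
  have hLm : L ∈ Ioc (0:ℝ) L := ⟨hL, le_refl _⟩
  refine ⟨sSup ((fun s => uFun d s L) '' Ioc 0 ε₀), hl_ge L hLm, hl_le L hLm, ?_, ?_, ?_⟩
  · rw [tendsto_order]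
    constructor
    · intro x hx
      obtain ⟨_, ⟨s₀, hs₀, rfl⟩, hxlt⟩ := exists_lt_of_lt_csSup (hSne L) hx
      have hmem : Ioc 0 s₀ ×ˢ Ioc 0 L ∈ (𝓝[>] (0:ℝ)) ×ˢ (𝓝[>] (0:ℝ)) :=
        prod_mem_prod (Ioc_mem_nhdsGT hs₀.1) (Ioc_mem_nhdsGT hL)
      filter_upwards [hmem] with st hst
      obtain ⟨h1, h2⟩ := hst
      have hst1 : st.1 ∈ Ioc (0:ℝ) ε₀ := ⟨h1.1, h1.2.trans hs₀.2⟩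
      calc x < uFun d s₀ L := hxlt
        _ ≤ uFun d st.1 L := hms L hLm st.1 hst1 s₀ hs₀ h1.2
        _ ≤ uFun d st.1 st.2 := hmt st.1 hst1 st.2 h2 L hLm h2.2
    · intro x hx
      have hmem : Ioc 0 ε₀ ×ˢ Ioc 0 L ∈ (𝓝[>] (0:ℝ)) ×ˢ (𝓝[>] (0:ℝ)) :=
        prod_mem_prod (Ioc_mem_nhdsGT hε₀) (Ioc_mem_nhdsGT hL)
      filter_upwards [hmem] with st hst
      obtain ⟨h1, h2⟩ := hst
      have hb : uFun d st.1 st.2 ≤ sSup ((fun s => uFun d s st.2) '' Ioc 0 ε₀) :=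
        le_csSup (hSbdd st.2 h2) (mem_image_of_mem _ h1)
      rw [hconst st.2 h2 L hLm h2.2] at hb
      linarith
  · intro τ hτ
    rw [← hconst τ hτ L hLm hτ.2]
    exact htend τ hτ
  · intro τ hτ
    rw [← hconst τ hτ L hLm hτ.2]
    exact hratio τ hτ

end Machine

section AngleLimit

variable {Y : Type*} [MetricSpace Y]

private lemma angle_limit [HadamardSpace Y] {p' : Y} {c₀ g₀ : ℝ → Y} {ε₀ L : ℝ}
    (hε₀ : 0 < ε₀) (hL : 0 < L) (hc : IsGeodesicOn c₀ 0 ε₀) (hc0 : c₀ 0 = p')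
    (hg : IsGeodesicOn g₀ 0 L) (hg0 : g₀ 0 = p') :
    ∃ M : ℝ, -1 ≤ M ∧ M ≤ 1 ∧
      Tendsto (fun st : ℝ × ℝ =>
          (st.1 ^ 2 + st.2 ^ 2 - dist (c₀ st.1) (g₀ st.2) ^ 2) / (2 * st.1 * st.2))
        ((𝓝[>] (0 : ℝ)) ×ˢ (𝓝[>] (0 : ℝ))) (𝓝 M) ∧
      (∀ τ ∈ Ioc (0:ℝ) L,
        Tendsto (fun s => (s ^ 2 + τ ^ 2 - dist (c₀ s) (g₀ τ) ^ 2) / (2 * s * τ))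
          (𝓝[>] (0 : ℝ)) (𝓝 M)) ∧
      (∀ τ ∈ Ioc (0:ℝ) L,
        Tendsto (fun s => (τ - dist (c₀ s) (g₀ τ)) / s) (𝓝[>] (0 : ℝ)) (𝓝 M)) := by
  have hcd : ∀ s ∈ Icc (0:ℝ) ε₀, dist p' (c₀ s) = s := by
    intro s hs
    rw [← hc0]
    exact geo_dist_start hc (le_of_lt hε₀) hs
  have hgd : ∀ τ ∈ Icc (0:ℝ) L, dist p' (g₀ τ) = τ := by
    intro τ hτ
    rw [← hg0]
    exact geo_dist_start hg (le_of_lt hL) hτ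
  have hIcc : ∀ {x b : ℝ}, x ∈ Ioc (0:ℝ) b → x ∈ Icc (0:ℝ) b :=
    fun hx => ⟨le_of_lt hx.1, hx.2⟩
  obtain ⟨M, h1, h2, h3, h4, h5⟩ := limit_machine hε₀ hL
      (fun s τ => dist (c₀ s) (g₀ τ))
      (by -- hlb
        intro s hs τ hτ
        have t1 := dist_triangle p' (c₀ s) (g₀ τ)
        have t2 := dist_triangle p' (g₀ τ) (c₀ s)
        rw [hcd s (hIcc hs), hgd τ (hIcc hτ)] at t1
        rw [hgd τ (hIcc hτ), dist_comm (g₀ τ) (c₀ s), hcd s (hIcc hs)] at t2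
        rw [abs_sub_le_iff]
        constructor <;> · linarith)
      (by -- hub
        intro s hs τ hτ
        have t1 := dist_triangle (c₀ s) p' (g₀ τ)
        rw [dist_comm (c₀ s) p', hcd s (hIcc hs), hgd τ (hIcc hτ)] at t1
        exact t1)
      (fun s _ τ _ => dist_nonneg)
      (by -- hms : antitone in s
        intro τ hτ s₁ hs₁ s₂ hs₂ hle
        have hcv := dist_sq_sub_sq_convexOn hc (g₀ τ)
        have hs₂0 : (0:ℝ) < s₂ := hs₂.1
        have hw1 : (0:ℝ) ≤ 1 - s₁ / s₂ := by
          rw [sub_nonneg, div_le_one hs₂0]; exact hle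
        have hw2 : (0:ℝ) ≤ s₁ / s₂ := by
          have := hs₁.1; positivity
        have hcomb := hcv.2 (left_mem_Icc.2 (le_of_lt hε₀)) (hIcc hs₂) hw1 hw2 (by ring)
        simp only [smul_eq_mul, mul_zero, zero_add,
          div_mul_cancel₀ _ (ne_of_gt hs₂0)] at hcomb
        have hf0 : dist (g₀ τ) (c₀ 0) = τ := by
          rw [dist_comm, hc0]
          exact hgd τ (hIcc hτ)
        rw [hf0] at hcomb
        have hkey := mul_le_mul_of_nonneg_left hcomb (le_of_lt hs₂0)
        have he : s₂ * ((1 - s₁ / s₂) * (τ ^ 2 - 0 ^ 2) +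
            s₁ / s₂ * (dist (g₀ τ) (c₀ s₂) ^ 2 - s₂ ^ 2)) =
            (s₂ - s₁) * τ ^ 2 + s₁ * (dist (g₀ τ) (c₀ s₂) ^ 2 - s₂ ^ 2) := by
          field_simp
          ring
        rw [he] at hkey
        rw [dist_comm (g₀ τ) (c₀ s₁), dist_comm (g₀ τ) (c₀ s₂)] at hkey
        simp only [uFun]
        rw [div_le_div_iff₀ (by nlinarith [hs₂.1, hτ.1]) (by nlinarith [hs₁.1, hτ.1])]
        nlinarith [hkey, hτ.1, hs₁.1, hs₂.1,
          mul_le_mul_of_nonneg_left hkey (le_of_lt hτ.1)])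
      (by -- hmt : antitone in τ
        intro s hs τ₁ hτ₁ τ₂ hτ₂ hle
        have hcv := dist_sq_sub_sq_convexOn hg (c₀ s)
        have hτ₂0 : (0:ℝ) < τ₂ := hτ₂.1
        have hw1 : (0:ℝ) ≤ 1 - τ₁ / τ₂ := by
          rw [sub_nonneg, div_le_one hτ₂0]; exact hle
        have hw2 : (0:ℝ) ≤ τ₁ / τ₂ := by
          have := hτ₁.1; positivity
        have hcomb := hcv.2 (left_mem_Icc.2 (le_of_lt hL)) (hIcc hτ₂) hw1 hw2 (by ring)
        simp only [smul_eq_mul, mul_zero, zero_add,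
          div_mul_cancel₀ _ (ne_of_gt hτ₂0)] at hcomb
        have hf0 : dist (c₀ s) (g₀ 0) = s := by
          rw [dist_comm, hg0]
          exact hcd s (hIcc hs)
        rw [hf0] at hcomb
        have hkey := mul_le_mul_of_nonneg_left hcomb (le_of_lt hτ₂0)
        have he : τ₂ * ((1 - τ₁ / τ₂) * (s ^ 2 - 0 ^ 2) +
            τ₁ / τ₂ * (dist (c₀ s) (g₀ τ₂) ^ 2 - τ₂ ^ 2)) =
            (τ₂ - τ₁) * s ^ 2 + τ₁ * (dist (c₀ s) (g₀ τ₂) ^ 2 - τ₂ ^ 2) := by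
          field_simp
          ring
        rw [he] at hkey
        simp only [uFun]
        rw [div_le_div_iff₀ (by nlinarith [hs.1, hτ₂.1]) (by nlinarith [hs.1, hτ₁.1])]
        nlinarith [hkey, hs.1, hτ₁.1, hτ₂.1,
          mul_le_mul_of_nonneg_left hkey (le_of_lt hs.1)])
      (by -- htri
        intro s hs τ₁ hτ₁ τ₂ hτ₂ hle
        have t1 := dist_triangle (c₀ s) (g₀ τ₁) (g₀ τ₂)
        rw [hg τ₁ (hIcc hτ₁) τ₂ (hIcc hτ₂), abs_of_nonpos (by linarith)] at t1
        linarith)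
  exact ⟨M, h1, h2, h3, h4, h5⟩

end AngleLimit

private lemma chord_estimate {t δ P : ℝ} (ht : 0 < t) (htδ : t < δ)
    (hPl : δ - t ≤ P) (hPu : P ≤ δ + t) :
    P ≤ δ - t * ((t ^ 2 + δ ^ 2 - P ^ 2) / (2 * t * δ)) + t ^ 2 / (2 * (δ - t)) := by
  have hδ0 : 0 < δ := lt_trans ht htδ
  have hP0 : 0 < P := by linarith
  set u := (t ^ 2 + δ ^ 2 - P ^ 2) / (2 * t * δ) with hu_def
  have hu : 2 * t * δ * u = t ^ 2 + δ ^ 2 - P ^ 2 := by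
    rw [hu_def, mul_div_cancel₀]
    positivity
  have huub : u ≤ 1 := by
    rw [hu_def, div_le_one (by positivity)]
    nlinarith
  have hulb : -1 ≤ u := by
    rw [hu_def, le_div_iff₀ (by positivity)]
    nlinarith
  have hy : 0 < δ - t * u := by nlinarith
  have h1 : P - (δ - t * u) ≤ (P ^ 2 - (δ - t * u) ^ 2) / (2 * (δ - t * u)) := by
    rw [le_div_iff₀ (by linarith)]
    nlinarith [sq_nonneg (P - (δ - t * u))]
  have h2 : P ^ 2 - (δ - t * u) ^ 2 = t ^ 2 * (1 - u ^ 2) := by linear_combination hu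
  have h3 : (P ^ 2 - (δ - t * u) ^ 2) / (2 * (δ - t * u)) ≤ t ^ 2 / (2 * (δ - t)) := by
    rw [h2]
    apply div_le_div₀ (sq_nonneg t) (by nlinarith [sq_nonneg u]) (by linarith) (by nlinarith)
  linarith

/-- For geodesics `c` issuing from `p` and `c'` issuing from `q`, the Alexandrov angle
`θ = ∠_p(c, pq)` (the limit of comparison angles along the geodesic `pq`) satisfies
`cos θ = lim_{t→0} (d(p, c'(t)) − d(c(t), c'(t)))/t`. -/
theorem stmt2 {Y : Type*} [MetricSpace Y] [HadamardSpace Y] (p q : Y) (hq : q ≠ p)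
    (c : ℝ → Y) (ε : ℝ) (hε : 0 < ε) (hc : IsGeodesicOn c 0 ε) (hc0 : c 0 = p)
    (c' : ℝ → Y) (ε' : ℝ) (hε' : 0 < ε') (hc' : IsGeodesicOn c' 0 ε') (hc'0 : c' 0 = q)
    (g : ℝ → Y) (hg : IsGeodesicOn g 0 (dist p q)) (hg0 : g 0 = p)
    (hg1 : g (dist p q) = q) :
    ∃ θ : ℝ,
      Tendsto (fun tt : ℝ × ℝ => compAngle p (c tt.1) (g tt.2))
        ((𝓝[>] (0 : ℝ)) ×ˢ (𝓝[>] (0 : ℝ))) (𝓝 θ) ∧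
      Tendsto (fun t : ℝ => (dist p (c' t) - dist (c t) (c' t)) / t) (𝓝[>] (0 : ℝ))
        (𝓝 (Real.cos θ)) := by
  set D := dist p q with hD
  have hD0 : 0 < D := dist_pos.2 (Ne.symm hq)
  have hDm : D ∈ Ioc (0:ℝ) D := ⟨hD0, le_refl _⟩
  have hD2m : D / 2 ∈ Ioc (0:ℝ) D := ⟨half_pos hD0, half_le_self hD0.le⟩
  obtain ⟨M, hM1, hM2, hMprod, hMfix, hMratio⟩ := angle_limit hε hD0 hc hc0 hg hg0
  have hgod : IsGeodesicOn (fun τ => g (D - τ)) 0 D := by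
    intro s hs t ht
    have h := hg (D - s) ⟨by linarith [hs.2], by linarith [hs.1]⟩
      (D - t) ⟨by linarith [ht.2], by linarith [ht.1]⟩
    simp only [] at h ⊢
    rw [h, show D - s - (D - t) = t - s by ring, abs_sub_comm]
  have hgod0 : (fun τ => g (D - τ)) 0 = q := by
    simp only [sub_zero]
    exact hg1
  obtain ⟨M', hM'1, hM'2, hM'prod, hM'fix, hM'ratio⟩ :=
    angle_limit hε' hD0 hc' hc'0 hgod hgod0
  have hcd : ∀ s ∈ Icc (0:ℝ) ε, dist p (c s) = s := by
    intro s hs; rw [← hc0]; exact geo_dist_start hc hε.le hs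
  have hgd : ∀ τ ∈ Icc (0:ℝ) D, dist p (g τ) = τ := by
    intro τ hτ; rw [← hg0]; exact geo_dist_start hg hD0.le hτ
  have hc'd : ∀ s ∈ Icc (0:ℝ) ε', dist q (c' s) = s := by
    intro s hs; rw [← hc'0]; exact geo_dist_start hc' hε'.le hs
  have hqg : dist q (g (D / 2)) = D / 2 := by
    rw [← hg1, dist_comm, hg (D / 2) ⟨by linarith, by linarith⟩ D ⟨hD0.le, le_refl _⟩,
      abs_of_nonpos (by linarith), neg_sub]
    ring
  have h0t : Tendsto (fun t : ℝ => t) (𝓝[>] (0:ℝ)) (𝓝 0) :=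
    tendsto_id.mono_left nhdsWithin_le_nhds
  -- key limit facts
  have hA : Tendsto (fun t => (D - dist (c t) q) / t) (𝓝[>] (0:ℝ)) (𝓝 M) := by
    have := hMratio D hDm
    simpa only [hg1] using this
  have hB : Tendsto (fun t => (D - dist p (c' t)) / t) (𝓝[>] (0:ℝ)) (𝓝 M') := by
    have := hM'ratio D hDm
    simp only [sub_self, hg0] at this
    simpa only [dist_comm p] using this
  have hU : Tendsto (fun t => (t ^ 2 + (D / 2) ^ 2 - dist (c t) (g (D / 2)) ^ 2) /
      (2 * t * (D / 2))) (𝓝[>] (0:ℝ)) (𝓝 M) := hMfix (D / 2) hD2m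
  have hU' : Tendsto (fun t => (t ^ 2 + (D / 2) ^ 2 - dist (c' t) (g (D / 2)) ^ 2) /
      (2 * t * (D / 2))) (𝓝[>] (0:ℝ)) (𝓝 M') := by
    have := hM'fix (D / 2) hD2m
    simpa only [sub_half] using this
  -- distance limits
  have hdq : Tendsto (fun t => dist (c t) q) (𝓝[>] (0:ℝ)) (𝓝 D) := by
    have h1 : Tendsto (fun t => dist (c t) q - D) (𝓝[>] (0:ℝ)) (𝓝 0) := by
      apply squeeze_zero_norm' _ h0t
      filter_upwards [Ioc_mem_nhdsGT hε] with t ht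
      have e1 : dist (c t) q ≤ dist (c t) p + D := by
        rw [hD]; exact dist_triangle _ _ _
      have e2 : D ≤ dist p (c t) + dist (c t) q := by rw [hD]; exact dist_triangle _ _ _
      rw [dist_comm (c t) p, hcd t ⟨ht.1.le, ht.2⟩] at e1
      rw [hcd t ⟨ht.1.le, ht.2⟩] at e2
      rw [Real.norm_eq_abs, abs_le]
      constructor <;> linarith
    simpa using h1.add_const D
  have hbt : Tendsto (fun t => dist p (c' t)) (𝓝[>] (0:ℝ)) (𝓝 D) := by
    have h1 : Tendsto (fun t => dist p (c' t) - D) (𝓝[>] (0:ℝ)) (𝓝 0) := by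
      apply squeeze_zero_norm' _ h0t
      filter_upwards [Ioc_mem_nhdsGT hε'] with t ht
      have e1 : dist p (c' t) ≤ D + dist q (c' t) := by
        rw [hD]; exact dist_triangle _ _ _
      have e2 : D ≤ dist p (c' t) + dist (c' t) q := by rw [hD]; exact dist_triangle _ _ _
      rw [hc'd t ⟨ht.1.le, ht.2⟩] at e1
      rw [dist_comm (c' t) q, hc'd t ⟨ht.1.le, ht.2⟩] at e2
      rw [Real.norm_eq_abs, abs_le]
      constructor <;> linarith
    simpa using h1.add_const D
  have hat : Tendsto (fun t => dist (c t) (c' t)) (𝓝[>] (0:ℝ)) (𝓝 D) := by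
    have h1 : Tendsto (fun t => dist (c t) (c' t) - D) (𝓝[>] (0:ℝ)) (𝓝 0) := by
      apply squeeze_zero_norm' _ (by simpa using h0t.const_mul (2:ℝ))
      filter_upwards [Ioc_mem_nhdsGT (lt_min hε hε')] with t ht
      have htε : t ∈ Icc (0:ℝ) ε := ⟨ht.1.le, ht.2.trans (min_le_left _ _)⟩
      have htε' : t ∈ Icc (0:ℝ) ε' := ⟨ht.1.le, ht.2.trans (min_le_right _ _)⟩
      have e1 : dist (c t) (c' t) ≤ dist (c t) p + D + dist q (c' t) := by
        rw [hD]; exact dist_triangle4 _ _ _ _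
      have e2 : D ≤ dist p (c t) + dist (c t) (c' t) + dist (c' t) q := by
        rw [hD]; exact dist_triangle4 _ _ _ _
      rw [dist_comm (c t) p, hcd t htε, hc'd t htε'] at e1
      rw [hcd t htε, dist_comm (c' t) q, hc'd t htε'] at e2
      rw [Real.norm_eq_abs, abs_le]
      constructor <;> linarith
    simpa using h1.add_const D
  refine ⟨Real.arccos M, ?_, ?_⟩
  · have hconv := (Real.continuous_arccos.tendsto M).comp hMprod
    apply Tendsto.congr' _ hconv
    filter_upwards [prod_mem_prod (Ioc_mem_nhdsGT hε)
      (Ioc_mem_nhdsGT hD0)] with st hst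
    obtain ⟨h1, h2⟩ := hst
    show Real.arccos _ = compAngle p (c st.1) (g st.2)
    rw [compAngle, hcd st.1 ⟨h1.1.le, h1.2⟩, hgd st.2 ⟨h2.1.le, h2.2⟩]
  · rw [Real.cos_arccos hM1 hM2]
    -- squeeze
    have herr : Tendsto (fun t : ℝ => t / (D / 2 - t)) (𝓝[>] (0:ℝ)) (𝓝 0) := by
      have := h0t.div (tendsto_const_nhds.sub h0t) (by simp; positivity : D / 2 - 0 ≠ 0)
      simpa [Pi.div_def] using this
    have hloT : Tendsto (fun t => -((D - dist p (c' t)) / t) +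
        (t ^ 2 + (D / 2) ^ 2 - dist (c t) (g (D / 2)) ^ 2) / (2 * t * (D / 2)) +
        (t ^ 2 + (D / 2) ^ 2 - dist (c' t) (g (D / 2)) ^ 2) / (2 * t * (D / 2)) -
        t / (D / 2 - t)) (𝓝[>] (0:ℝ)) (𝓝 M) := by
      have h := ((hB.neg.add hU).add hU').sub herr
      have hval : -M' + M + M' - 0 = M := by ring
      rwa [hval] at h
    have hupT : Tendsto (fun t => ((D - dist (c t) q) / t * (D + dist (c t) q) + 2 * t) /
        (dist (c t) (c' t) + dist p (c' t))) (𝓝[>] (0:ℝ)) (𝓝 M) := by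
      have hnum : Tendsto (fun t => (D - dist (c t) q) / t * (D + dist (c t) q) + 2 * t)
          (𝓝[>] (0:ℝ)) (𝓝 (M * (D + D) + 2 * 0)) :=
        (hA.mul (tendsto_const_nhds.add hdq)).add (h0t.const_mul 2)
      have h := hnum.div (hat.add hbt) (by linarith : D + D ≠ 0)
      have hval : (M * (D + D) + 2 * 0) / (D + D) = M := by
        rw [mul_zero, add_zero]
        exact mul_div_cancel_right₀ _ (by linarith)
      rwa [hval] at h
    apply tendsto_of_tendsto_of_tendsto_of_le_of_le' hloT hupT
    · -- lower bound eventual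
      filter_upwards [Ioc_mem_nhdsGT (lt_min hε (lt_min hε' (by linarith : (0:ℝ) < D / 4)))]
        with t ht
      have ht1 : 0 < t := ht.1
      have htε : t ∈ Icc (0:ℝ) ε := ⟨ht1.le, ht.2.trans ((min_le_left _ _))⟩
      have htε' : t ∈ Icc (0:ℝ) ε' :=
        ⟨ht1.le, ht.2.trans ((min_le_right _ _).trans (min_le_left _ _))⟩
      have htD : t ≤ D / 4 := ht.2.trans ((min_le_right _ _).trans (min_le_right _ _))
      have htD2 : t < D / 2 := by linarith
      have hPl : D / 2 - t ≤ dist (c t) (g (D / 2)) := by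
        have e := dist_triangle p (c t) (g (D / 2))
        rw [hcd t htε] at e
        rw [hgd (D / 2) ⟨by linarith, by linarith⟩] at e
        linarith
      have hPu : dist (c t) (g (D / 2)) ≤ D / 2 + t := by
        have e := dist_triangle (c t) p (g (D / 2))
        rw [dist_comm (c t) p, hcd t htε, hgd (D / 2) ⟨by linarith, by linarith⟩] at e
        linarith
      have hQl : D / 2 - t ≤ dist (c' t) (g (D / 2)) := by
        have e := dist_triangle q (c' t) (g (D / 2))
        rw [hc'd t htε', hqg] at e
        linarith
      have hQu : dist (c' t) (g (D / 2)) ≤ D / 2 + t := by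
        have e := dist_triangle (c' t) q (g (D / 2))
        rw [dist_comm (c' t) q, hc'd t htε', hqg] at e
        linarith
      have hkP := chord_estimate ht1 htD2 hPl hPu
      have hkQ := chord_estimate ht1 htD2 hQl hQu
      have ineq1 : dist (c t) (c' t) ≤ dist (c t) (g (D / 2)) + dist (c' t) (g (D / 2)) := by
        have e := dist_triangle (c t) (g (D / 2)) (c' t)
        rw [dist_comm (g (D / 2)) (c' t)] at e
        exact e
      rw [← sub_nonneg]
      set E := (t ^ 2 + (D / 2) ^ 2 - dist (c t) (g (D / 2)) ^ 2) / (2 * t * (D / 2)) with hE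
      set E' := (t ^ 2 + (D / 2) ^ 2 - dist (c' t) (g (D / 2)) ^ 2) / (2 * t * (D / 2)) with hE'
      rw [sub_nonneg, le_div_iff₀ ht1]
      have expand : (-((D - dist p (c' t)) / t) + E + E' - t / (D / 2 - t)) * t =
          -(D - dist p (c' t)) + t * E + t * E' - t ^ 2 / (D / 2 - t) := by
        field_simp
      rw [expand]
      have herr2 : t ^ 2 / (2 * (D / 2 - t)) + t ^ 2 / (2 * (D / 2 - t)) =
          t ^ 2 / (D / 2 - t) := by
        field_simp
        ring
      linarith [hkP, hkQ, ineq1, herr2]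
    · -- upper bound eventual
      filter_upwards [Ioc_mem_nhdsGT (lt_min hε (lt_min hε' (by linarith : (0:ℝ) < D / 4)))]
        with t ht
      have ht1 : 0 < t := ht.1
      have htε : t ∈ Icc (0:ℝ) ε := ⟨ht1.le, ht.2.trans ((min_le_left _ _))⟩
      have htε' : t ∈ Icc (0:ℝ) ε' :=
        ⟨ht1.le, ht.2.trans ((min_le_right _ _).trans (min_le_left _ _))⟩
      have htD : t ≤ D / 4 := ht.2.trans ((min_le_right _ _).trans (min_le_right _ _))
      have hquad := quad_ineq p (c t) (c' t) q
      rw [hcd t htε, dist_comm (c' t) q, hc'd t htε', dist_comm q p, ← hD] at hquad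
      have hat_lb : D - 2 * t ≤ dist (c t) (c' t) := by
        have e : D ≤ dist p (c t) + dist (c t) (c' t) + dist (c' t) q := by
          rw [hD]; exact dist_triangle4 _ _ _ _
        rw [hcd t htε, dist_comm (c' t) q, hc'd t htε'] at e
        linarith
      have hbt_lb : D - t ≤ dist p (c' t) := by
        have e : D ≤ dist p (c' t) + dist (c' t) q := by rw [hD]; exact dist_triangle _ _ _
        rw [dist_comm (c' t) q, hc'd t htε'] at e
        linarith
      have hden : 0 < dist (c t) (c' t) + dist p (c' t) := by linarith
      rw [div_le_div_iff₀ ht1 hden]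
      have e : ((D - dist (c t) q) / t * (D + dist (c t) q) + 2 * t) * t =
          (D - dist (c t) q) * (D + dist (c t) q) + 2 * t ^ 2 := by
        field_simp
      rw [e]
      nlinarith [hquad]
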